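/- For all integers n ≥ 0 and j ≥ 0, d_{4j+3}(4n + 3) ≡ 0 (mod 4). -/

import Mathlib

open PowerSeries Finset

namespace Stmt5Aux

variable {R : Type*} [CommRing R]

/-- The operator `f ↦ X * f'` on power series, defined coefficientwise. -/
noncomputable def th (f : R⟦X⟧) : R⟦X⟧ := PowerSeries.mk fun n => (n : R) * coeff (R := R) n f

@[simp] lemma coeff_th (n : ℕ) (f : R⟦X⟧) : coeff (R := R) n (th f) = (n : R) * coeff (R := R) n f :=
  coeff_mk _ _

@[simp] lemma th_one : th (1 : R⟦X⟧) = 0 := by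
  ext n
  simp only [coeff_th, coeff_one, map_zero]
  split <;> simp_all

lemma th_mul (f g : R⟦X⟧) : th (f * g) = th f * g + f * th g := by
  ext n
  simp only [coeff_th, map_add, coeff_mul, Finset.mul_sum, ← Finset.sum_add_distrib]
  refine Finset.sum_congr rfl fun p hp => ?_
  rw [Finset.HasAntidiagonal.mem_antidiagonal] at hp
  rw [← hp]
  push_cast
  ring

lemma th_X_pow (m : ℕ) : th ((X : R⟦X⟧) ^ m) = (m : R⟦X⟧) * X ^ m := by
  ext n
  rw [coeff_th, ← map_natCast (C (R := R)) m, coeff_C_mul, coeff_X_pow]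
  split <;> simp_all

lemma th_sub (f g : R⟦X⟧) : th (f - g) = th f - th g := by
  ext n
  simp only [coeff_th, map_sub, mul_sub]

lemma th_one_sub_X_pow (m : ℕ) :
    th ((1 : R⟦X⟧) - X ^ m) = -((m : R⟦X⟧) * X ^ m) := by
  rw [th_sub, th_one, th_X_pow]
  ring

/-- uniqueness of inverses -/
lemma inv_unique {f g h : R⟦X⟧} (hg : f * g = 1) (hh : f * h = 1) : g = h := by
  calc g = g * (f * h) := by rw [hh, mul_one]
    _ = (f * g) * h := by ring
    _ = h := by rw [hg, one_mul]

lemma ld_inv {f g : R⟦X⟧} (h : f * g = 1) : th g * f = -(th f * g) := by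
  have := th_mul f g
  rw [h, th_one] at this
  linear_combination -this

lemma ld_pow {f g : R⟦X⟧} (h : f * g = 1) (a : ℕ) :
    th (f ^ a) * g ^ a = (a : R⟦X⟧) * (th f * g) := by
  induction a with
  | zero => simp
  | succ a ih =>
    have hpow : f ^ a * g ^ a = 1 := by
      rw [← mul_pow, h, one_pow]
    rw [pow_succ, th_mul]
    push_cast
    calc (th (f ^ a) * f + f ^ a * th f) * g ^ (a + 1)
        = (th (f ^ a) * g ^ a) * (f * g) + (f ^ a * g ^ a) * (th f * g) := by ring
      _ = (a : R⟦X⟧) * (th f * g) + 1 * (th f * g) := by rw [ih, h, hpow, mul_one]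
      _ = ((a : R⟦X⟧) + 1) * (th f * g) := by ring

lemma ld_prod {ι : Type*} (s : Finset ι) (f g : ι → R⟦X⟧)
    (h : ∀ i ∈ s, f i * g i = 1) :
    th (∏ i ∈ s, f i) * ∏ i ∈ s, g i = ∑ i ∈ s, th (f i) * g i := by
  classical
  induction s using Finset.induction_on with
  | empty => simp
  | @insert a s ha ih =>
    rw [Finset.prod_insert ha, Finset.prod_insert ha, Finset.sum_insert ha, th_mul]
    have hfs : (∏ i ∈ s, f i) * (∏ i ∈ s, g i) = 1 := by
      rw [← Finset.prod_mul_distrib]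
      exact Finset.prod_eq_one fun i hi => h i (Finset.mem_insert_of_mem hi)
    have ha1 : f a * g a = 1 := h a (Finset.mem_insert_self a s)
    calc (th (f a) * ∏ i ∈ s, f i + f a * th (∏ i ∈ s, f i)) * (g a * ∏ i ∈ s, g i)
        = (th (f a) * g a) * ((∏ i ∈ s, f i) * ∏ i ∈ s, g i)
          + (f a * g a) * (th (∏ i ∈ s, f i) * ∏ i ∈ s, g i) := by ring
      _ = th (f a) * g a + ∑ i ∈ s, th (f i) * g i := by
          rw [hfs, ha1, ih (fun i hi => h i (Finset.mem_insert_of_mem hi))]; ring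

/-- geometric series: the inverse of `1 - X^c`. -/
noncomputable def geo (c : ℕ) : R⟦X⟧ := PowerSeries.mk fun i => if c ∣ i then 1 else 0

@[simp] lemma coeff_geo (c i : ℕ) : coeff (R := R) i (geo c) = if c ∣ i then 1 else 0 := coeff_mk _ _

lemma one_sub_X_pow_mul_geo {c : ℕ} (hc : 1 ≤ c) : ((1 : R⟦X⟧) - X ^ c) * geo c = 1 := by
  ext i
  rw [sub_mul, one_mul, map_sub, coeff_X_pow_mul', coeff_one, coeff_geo]
  rcases Nat.eq_zero_or_pos i with rfl | hi
  · have h1 : c ∣ 0 := dvd_zero c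
    have h2 : ¬ c ≤ 0 := by omega
    simp [h1, h2]
  · have h0 : ¬ (i = 0) := by omega
    rw [if_neg h0]
    by_cases hle : c ≤ i
    · rw [if_pos hle, coeff_geo]
      have : c ∣ i ↔ c ∣ i - c := by
        constructor
        · intro h; exact (Nat.dvd_sub h dvd_rfl)
        · intro h; have := Nat.dvd_add h (dvd_refl c); rwa [Nat.sub_add_cancel hle] at this
      by_cases hd : c ∣ i
      · rw [if_pos hd, if_pos (this.mp hd)]; ring
      · rw [if_neg hd, if_neg (fun hh => hd (this.mpr hh))]; ring
    · rw [if_neg hle]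
      have : ¬ c ∣ i := fun h => hle (Nat.le_of_dvd hi h)
      simp [this]

/-- supported on multiples of 4 -/
def S4 (f : R⟦X⟧) : Prop := ∀ i : ℕ, ¬ (4 ∣ i) → coeff (R := R) i f = 0

lemma S4_one : S4 (1 : R⟦X⟧) := by
  intro i hi
  rw [coeff_one, if_neg]
  rintro rfl; exact hi ⟨0, rfl⟩

lemma S4_mul {f g : R⟦X⟧} (hf : S4 f) (hg : S4 g) : S4 (f * g) := by
  intro i hi
  rw [coeff_mul]
  refine Finset.sum_eq_zero fun p hp => ?_
  rw [Finset.HasAntidiagonal.mem_antidiagonal] at hp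
  by_cases h1 : 4 ∣ p.1
  · have h2 : ¬ 4 ∣ p.2 := by omega
    rw [hg p.2 h2, mul_zero]
  · rw [hf p.1 h1, zero_mul]

lemma S4_prod {ι : Type*} (s : Finset ι) (f : ι → R⟦X⟧) (h : ∀ i ∈ s, S4 (f i)) :
    S4 (∏ i ∈ s, f i) := by
  classical
  induction s using Finset.induction_on with
  | empty => simpa using S4_one
  | @insert a s ha ih =>
    rw [Finset.prod_insert ha]
    exact S4_mul (h a (Finset.mem_insert_self a s))
      (ih fun i hi => h i (Finset.mem_insert_of_mem hi))

lemma S4_pow {f : R⟦X⟧} (hf : S4 f) (a : ℕ) : S4 (f ^ a) := by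
  induction a with
  | zero => simpa using S4_one
  | succ a ih => rw [pow_succ]; exact S4_mul ih hf

lemma S4_one_sub_X_pow_four_mul (m : ℕ) : S4 ((1 : R⟦X⟧) - X ^ (4 * m)) := by
  intro i hi
  rw [map_sub, coeff_one, coeff_X_pow, if_neg, if_neg]
  · ring
  · rintro rfl; exact hi ⟨m, rfl⟩
  · rintro rfl; exact hi ⟨0, rfl⟩

lemma S4_of_inv {g h : R⟦X⟧} (hg : S4 g) (hg0 : constantCoeff (R := R) g = 1)
    (hgh : g * h = 1) : S4 h := by
  intro i
  induction i using Nat.strong_induction_on with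
  | _ i ih =>
    intro hi
    have hi0 : i ≠ 0 := by rintro rfl; exact hi ⟨0, rfl⟩
    have h0 : coeff (R := R) i (g * h) = 0 := by rw [hgh, coeff_one, if_neg hi0]
    rw [coeff_mul] at h0
    have hmem : ((0 : ℕ), i) ∈ Finset.HasAntidiagonal.antidiagonal i := by
      rw [Finset.HasAntidiagonal.mem_antidiagonal]; simp
    rw [Finset.sum_eq_single_of_mem ((0 : ℕ), i) hmem] at h0
    · have : coeff (R := R) 0 g = 1 := by
        rw [coeff_zero_eq_constantCoeff]; exact hg0
      rw [this, one_mul] at h0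
      exact h0
    · intro p hp hne
      rw [Finset.HasAntidiagonal.mem_antidiagonal] at hp
      have hp2 : p.2 < i := by
        rcases Nat.eq_zero_or_pos p.1 with h1 | h1
        · exfalso; apply hne
          have : p.2 = i := by omega
          exact Prod.ext h1 this
        · omega
      by_cases h4 : 4 ∣ p.2
      · have : ¬ 4 ∣ p.1 := by omega
        rw [hg p.1 this, zero_mul]
      · rw [ih p.2 hp2 h4, mul_zero]


lemma ld_mul {A A' B B' : R⟦X⟧} (hA : A * A' = 1) (hB : B * B' = 1) :
    th (A * B) * (A' * B') = th A * A' + th B * B' := by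
  rw [th_mul]
  calc (th A * B + A * th B) * (A' * B')
      = (th A * A') * (B * B') + (th B * B') * (A * A') := by ring
    _ = th A * A' + th B * B' := by rw [hA, hB]; ring

lemma dvd_prod_sub_one {ι : Type*} (s : Finset ι) (F : ι → R⟦X⟧) (x : R⟦X⟧)
    (h : ∀ m ∈ s, x ∣ F m - 1) : x ∣ (∏ m ∈ s, F m) - 1 := by
  classical
  induction s using Finset.induction_on with
  | empty => simp
  | @insert a s ha ih =>
    rw [Finset.prod_insert ha]
    have : F a * (∏ m ∈ s, F m) - 1
        = F a * ((∏ m ∈ s, F m) - 1) + (F a - 1) := by ring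
    rw [this]
    exact dvd_add (Dvd.dvd.mul_left (ih fun m hm => h m (Finset.mem_insert_of_mem hm)) _)
      (h a (Finset.mem_insert_self a s))

lemma coeff_eq_of_dvd {N : ℕ} {f g : R⟦X⟧} (h : (X : R⟦X⟧) ^ (N + 1) ∣ f - g)
    {i : ℕ} (hi : i ≤ N) : coeff (R := R) i f = coeff (R := R) i g := by
  have h0 := (X_pow_dvd_iff.mp h) i (by omega)
  rw [map_sub] at h0
  exact sub_eq_zero.mp h0

lemma coeff_mul_prod_cut (A : R⟦X⟧) {i N : ℕ} (hiN : i ≤ N) (F : ℕ → R⟦X⟧)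
    (hF : ∀ m, i < m → (X : R⟦X⟧) ^ (i + 1) ∣ F m - 1) :
    coeff (R := R) i (A * ∏ m ∈ Icc 1 N, F m) = coeff (R := R) i (A * ∏ m ∈ Icc 1 i, F m) := by
  classical
  have hsplit : (∏ m ∈ Icc 1 N, F m)
      = (∏ m ∈ (Icc 1 N).filter (fun m => m ≤ i), F m)
        * ∏ m ∈ (Icc 1 N).filter (fun m => ¬ m ≤ i), F m :=
    (Finset.prod_filter_mul_prod_filter_not _ _ _).symm
  have hfe : (Icc 1 N).filter (fun m => m ≤ i) = Icc 1 i := by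
    ext x
    simp only [Finset.mem_filter, Finset.mem_Icc]
    omega
  have hdvd : (X : R⟦X⟧) ^ (i + 1) ∣ (∏ m ∈ (Icc 1 N).filter (fun m => ¬ m ≤ i), F m) - 1 := by
    refine dvd_prod_sub_one _ _ _ fun m hm => ?_
    rw [Finset.mem_filter] at hm
    exact hF m (by omega)
  apply coeff_eq_of_dvd (N := i) _ le_rfl
  rw [hsplit, hfe]
  have : A * ((∏ m ∈ Icc 1 i, F m) * ∏ m ∈ (Icc 1 N).filter (fun m => ¬ m ≤ i), F m)
      - A * ∏ m ∈ Icc 1 i, F m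
      = (A * ∏ m ∈ Icc 1 i, F m) * ((∏ m ∈ (Icc 1 N).filter (fun m => ¬ m ≤ i), F m) - 1) := by
    ring
  rw [this]
  exact Dvd.dvd.mul_left hdvd _

lemma dvd_pow_factor_sub_one {c e i m : ℕ} (him : i < m) (hc : 1 ≤ c) :
    (X : R⟦X⟧) ^ (i + 1) ∣ ((1 : R⟦X⟧) - X ^ (c * m)) ^ e - 1 := by
  have h1 : ((1 : R⟦X⟧) - X ^ (c * m)) - 1 ∣ ((1 : R⟦X⟧) - X ^ (c * m)) ^ e - 1 := by
    have := sub_dvd_pow_sub_pow ((1 : R⟦X⟧) - X ^ (c * m)) 1 e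
    simpa using this
  refine dvd_trans ?_ h1
  have h2 : (X : R⟦X⟧) ^ (i + 1) ∣ X ^ (c * m) :=
    pow_dvd_pow X (by nlinarith)
  have : ((1 : R⟦X⟧) - X ^ (c * m)) - 1 = -(X ^ (c * m)) := by ring
  rw [this]
  exact h2.neg_right

lemma constCoeff_one_sub_X_pow {c : ℕ} (hc : 1 ≤ c) :
    constantCoeff (R := R) ((1 : R⟦X⟧) - X ^ c) = 1 := by
  rw [← coeff_zero_eq_constantCoeff, map_sub, coeff_one, coeff_X_pow,
    if_pos rfl, if_neg (by omega)]
  ring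

lemma sq_mod_four_ne_three (a b : ℕ) (hb : a * a = b) : b % 4 ≠ 3 := by
  have h := Nat.mul_mod a a 4
  have h2 : a % 4 < 4 := Nat.mod_lt _ (by norm_num)
  interval_cases h : a % 4 <;> omega


lemma zmod4_four : (4 : (ZMod 4)⟦X⟧) = 0 := by
  have h : ((4 : ℕ) : ZMod 4) = 0 := by decide
  calc (4 : (ZMod 4)⟦X⟧) = ((4 : ℕ) : (ZMod 4)⟦X⟧) := by norm_cast
    _ = C (R := ZMod 4) ((4 : ℕ) : ZMod 4) := (map_natCast _ _).symm
    _ = 0 := by rw [h, map_zero]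

lemma zmod2_two : (2 : (ZMod 2)⟦X⟧) = 0 := by
  have h : ((2 : ℕ) : ZMod 2) = 0 := by decide
  calc (2 : (ZMod 2)⟦X⟧) = ((2 : ℕ) : (ZMod 2)⟦X⟧) := by norm_cast
    _ = C (R := ZMod 2) ((2 : ℕ) : ZMod 2) := (map_natCast _ _).symm
    _ = 0 := by rw [h, map_zero]

lemma zmod4_pow_four (m : ℕ) :
    ((1 : (ZMod 4)⟦X⟧) - X ^ m) ^ 4 = (1 - X ^ (2 * m)) ^ 2 := by
  have h4 := zmod4_four
  have hx : (X : (ZMod 4)⟦X⟧) ^ (2 * m) = (X ^ m) ^ 2 := by rw [mul_comm, pow_mul]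
  rw [hx]
  linear_combination (2 * ((X : (ZMod 4)⟦X⟧) ^ m) ^ 2 - (X : (ZMod 4)⟦X⟧) ^ m
    - ((X : (ZMod 4)⟦X⟧) ^ m) ^ 3) * h4

lemma zmod2_sq (m : ℕ) :
    ((1 : (ZMod 2)⟦X⟧) - X ^ m) ^ 2 = 1 - X ^ (2 * m) := by
  have h2 := zmod2_two
  have hx : (X : (ZMod 2)⟦X⟧) ^ (2 * m) = (X ^ m) ^ 2 := by rw [mul_comm, pow_mul]
  rw [hx]
  linear_combination (((X : (ZMod 2)⟦X⟧) ^ m) ^ 2 - (X : (ZMod 2)⟦X⟧) ^ m) * h2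

variable (R) in
/-- truncated product `∏_{m=1}^{N} (1 - X^{cm})` -/
noncomputable def E (N c : ℕ) : R⟦X⟧ := ∏ m ∈ Icc 1 N, (1 - X ^ (c * m))

variable (R) in
noncomputable def Geo (N c : ℕ) : R⟦X⟧ := ∏ m ∈ Icc 1 N, geo (c * m)

variable (R) in
noncomputable def Lser (N c : ℕ) : R⟦X⟧ :=
  ∑ m ∈ Icc 1 N, (m : R⟦X⟧) * (X ^ (c * m) * geo (c * m))

lemma E_mul_Geo (N c : ℕ) (hc : 1 ≤ c) : E R N c * Geo R N c = 1 := by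
  rw [E, Geo, ← Finset.prod_mul_distrib]
  refine Finset.prod_eq_one fun m hm => ?_
  rw [Finset.mem_Icc] at hm
  exact one_sub_X_pow_mul_geo (by nlinarith [hm.1])

lemma th_E_mul_Geo (N c : ℕ) (hc : 1 ≤ c) :
    th (E R N c) * Geo R N c = -((c : R⟦X⟧) * Lser R N c) := by
  rw [E, Geo, ld_prod _ _ _ (fun m hm => by
    rw [Finset.mem_Icc] at hm
    exact one_sub_X_pow_mul_geo (by nlinarith [hm.1])), Lser, Finset.mul_sum, ← Finset.sum_neg_distrib]
  refine Finset.sum_congr rfl fun m hm => ?_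
  rw [th_one_sub_X_pow]
  push_cast
  ring

section Maps
variable {S : Type*} [CommRing S] (ρ : R →+* S)

lemma map_geo (c : ℕ) : PowerSeries.map ρ (geo c) = geo c := by
  ext i
  rw [coeff_map, coeff_geo, coeff_geo]
  split <;> simp

lemma map_E (N c : ℕ) : PowerSeries.map ρ (E R N c) = E S N c := by
  rw [E, E, map_prod]
  exact Finset.prod_congr rfl fun m _ => by
    rw [map_sub, map_one, map_pow, PowerSeries.map_X]

lemma map_Geo (N c : ℕ) : PowerSeries.map ρ (Geo R N c) = Geo S N c := by
  rw [Geo, Geo, map_prod]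
  exact Finset.prod_congr rfl fun m _ => map_geo ρ _

lemma map_Lser (N c : ℕ) : PowerSeries.map ρ (Lser R N c) = Lser S N c := by
  rw [Lser, Lser, map_sum]
  exact Finset.sum_congr rfl fun m _ => by
    rw [map_mul, map_natCast, map_mul, map_pow, PowerSeries.map_X, map_geo]

end Maps

lemma constCoeff_E (N c : ℕ) (hc : 1 ≤ c) : constantCoeff (R := R) (E R N c) = 1 := by
  rw [E, map_prod]
  refine Finset.prod_eq_one fun m hm => ?_
  rw [Finset.mem_Icc] at hm
  exact constCoeff_one_sub_X_pow (by nlinarith [hm.1])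

lemma E_one_sq (N : ℕ) : (E (ZMod 2) N 1) ^ 2 = E (ZMod 2) N 2 := by
  rw [E, E, ← Finset.prod_pow]
  refine Finset.prod_congr rfl fun m _ => ?_
  have := zmod2_sq (1 * m)
  rw [this]
  norm_num

lemma E_two_sq (N : ℕ) : (E (ZMod 2) N 2) ^ 2 = E (ZMod 2) N 4 := by
  rw [E, E, ← Finset.prod_pow]
  refine Finset.prod_congr rfl fun m _ => ?_
  have := zmod2_sq (2 * m)
  rw [this, show 2 * (2 * m) = 4 * m by ring]

lemma S4_E_four (N : ℕ) : S4 (E R N 4) := by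
  rw [E]
  exact S4_prod _ _ fun m _ => S4_one_sub_X_pow_four_mul m

lemma coeff_L_one_odd {N b : ℕ} (hbN : b ≤ N) (hb : b % 4 = 3) :
    coeff (R := ZMod 2) b (Lser (ZMod 2) N 1) = 0 := by
  have hb0 : b ≠ 0 := by omega
  rw [Lser, map_sum]
  have hterm : ∀ m ∈ Icc 1 N,
      coeff (R := ZMod 2) b ((m : (ZMod 2)⟦X⟧) * (X ^ (1 * m) * geo (1 * m)))
        = if m ∈ b.divisors then 1 else 0 := by
    intro m hm
    rw [Finset.mem_Icc] at hm
    rw [one_mul, ← map_natCast (C (R := ZMod 2)) m, coeff_C_mul, coeff_X_pow_mul', coeff_geo]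
    by_cases hdv : m ∈ b.divisors
    · rw [if_pos hdv]
      rw [Nat.mem_divisors] at hdv
      have hmb : m ≤ b := Nat.le_of_dvd (by omega) hdv.1
      have hmd : m ∣ b - m := Nat.dvd_sub hdv.1 dvd_rfl
      rw [if_pos hmb, if_pos hmd]
      have hmodd : m % 2 = 1 := by
        rcases Nat.even_or_odd m with he | ho
        · exfalso
          have h2 : (2 : ℕ) ∣ b := dvd_trans he.two_dvd hdv.1
          omega
        · exact Nat.odd_iff.mp ho
      have : ((m : ℕ) : ZMod 2) = 1 := by
        rw [← Nat.mod_add_div m 2, hmodd]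
        push_cast
        rw [show (2 : ZMod 2) = 0 from rfl]
        ring
      rw [this, mul_one]
    · rw [if_neg hdv]
      rw [Nat.mem_divisors] at hdv
      have hnd : ¬ m ∣ b := fun h => hdv ⟨h, hb0⟩
      by_cases hmb : m ≤ b
      · rw [if_pos hmb, if_neg, mul_zero]
        intro hcon
        exact hnd (by
          have := Nat.dvd_add hcon (dvd_refl m)
          rwa [Nat.sub_add_cancel hmb] at this)
      · rw [if_neg hmb, mul_zero]
  rw [Finset.sum_congr rfl hterm, Finset.sum_ite_mem]
  have hins : Icc 1 N ∩ b.divisors = b.divisors := by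
    ext x
    simp only [Finset.mem_inter, Nat.mem_divisors, Finset.mem_Icc]
    constructor
    · tauto
    · intro hx
      refine ⟨⟨?_, ?_⟩, hx⟩
      · have := Nat.pos_of_dvd_of_pos hx.1 (by omega)
        omega
      · have := Nat.le_of_dvd (by omega) hx.1
        omega
  rw [hins]
  refine Finset.sum_involution (fun d _ => b / d) ?_ ?_ ?_ ?_
  · intro a ha; decide
  · intro a ha _
    rw [Nat.mem_divisors] at ha
    intro heq
    have heq' : b / a = a := heq
    have hmul : a * a = b := by
      have h1 : b / a * a = b := Nat.div_mul_cancel ha.1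
      rw [heq'] at h1
      exact h1
    exact sq_mod_four_ne_three a b hmul hb
  · intro a ha
    rw [Nat.mem_divisors] at ha ⊢
    exact ⟨Nat.div_dvd_of_dvd ha.1, ha.2⟩
  · intro a ha
    rw [Nat.mem_divisors] at ha
    exact Nat.div_div_self ha.1 ha.2

lemma coeff_L_two_odd {N b : ℕ} (hb : b % 2 = 1) :
    coeff (R := ZMod 2) b (Lser (ZMod 2) N 2) = 0 := by
  rw [Lser, map_sum]
  refine Finset.sum_eq_zero fun m hm => ?_
  rw [← map_natCast (C (R := ZMod 2)) m, coeff_C_mul, coeff_X_pow_mul', coeff_geo]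
  by_cases h1 : 2 * m ≤ b
  · rw [if_pos h1, if_neg, mul_zero]
    intro hcon
    have h2 : 2 * m ∣ b := by
      have := Nat.dvd_add hcon (dvd_refl (2 * m))
      rwa [Nat.sub_add_cancel h1] at this
    have : 2 ∣ b := dvd_trans ⟨m, rfl⟩ h2
    omega
  · rw [if_neg h1, mul_zero]

/-! ### The series `T` and its logarithmic derivative, over `ZMod 4` -/

variable (N j : ℕ)

noncomputable def TT : (ZMod 4)⟦X⟧ :=
  E (ZMod 4) N 2 ^ (4 * j + 3) * (Geo (ZMod 4) N 1 ^ 2 * Geo (ZMod 4) N 2 ^ (6 * j + 4))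

lemma DpGp : (E (ZMod 4) N 1 ^ 2 * E (ZMod 4) N 2 ^ (6 * j + 4))
    * (Geo (ZMod 4) N 1 ^ 2 * Geo (ZMod 4) N 2 ^ (6 * j + 4)) = 1 := by
  have h : (E (ZMod 4) N 1 ^ 2 * E (ZMod 4) N 2 ^ (6 * j + 4))
      * (Geo (ZMod 4) N 1 ^ 2 * Geo (ZMod 4) N 2 ^ (6 * j + 4))
      = (E (ZMod 4) N 1 * Geo (ZMod 4) N 1) ^ 2
        * (E (ZMod 4) N 2 * Geo (ZMod 4) N 2) ^ (6 * j + 4) := by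
    rw [mul_pow, mul_pow]; ring
  rw [h, E_mul_Geo N 1 le_rfl, E_mul_Geo N 2 (by omega), one_pow, one_pow, mul_one]

lemma TT_spec : TT N j * (E (ZMod 4) N 1 ^ 2 * E (ZMod 4) N 2 ^ (6 * j + 4))
    = E (ZMod 4) N 2 ^ (4 * j + 3) := by
  rw [TT, mul_assoc, mul_comm (Geo (ZMod 4) N 1 ^ 2 * _) _, ← mul_assoc, mul_assoc, DpGp, mul_one]

lemma th_TT : th (TT N j)
    = (2 * (Lser (ZMod 4) N 1 + ((2 * j + 1 : ℕ) : (ZMod 4)⟦X⟧) * Lser (ZMod 4) N 2))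
      * TT N j := by
  have hE1G1 : E (ZMod 4) N 1 * Geo (ZMod 4) N 1 = 1 := E_mul_Geo N 1 le_rfl
  have hE2G2 : E (ZMod 4) N 2 * Geo (ZMod 4) N 2 = 1 := E_mul_Geo N 2 (by omega)
  have hG1E1 : Geo (ZMod 4) N 1 * E (ZMod 4) N 1 = 1 := by rw [mul_comm]; exact hE1G1
  have hG2E2 : Geo (ZMod 4) N 2 * E (ZMod 4) N 2 = 1 := by rw [mul_comm]; exact hE2G2
  have hpow43 : E (ZMod 4) N 2 ^ (4 * j + 3) * Geo (ZMod 4) N 2 ^ (4 * j + 3) = 1 := by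
    rw [← mul_pow, hE2G2, one_pow]
  have hGpDp : (Geo (ZMod 4) N 1 ^ 2 * Geo (ZMod 4) N 2 ^ (6 * j + 4))
      * (E (ZMod 4) N 1 ^ 2 * E (ZMod 4) N 2 ^ (6 * j + 4)) = 1 := by
    rw [mul_comm]; exact DpGp N j
  have hG1p : Geo (ZMod 4) N 1 ^ 2 * E (ZMod 4) N 1 ^ 2 = 1 := by
    rw [← mul_pow, hG1E1, one_pow]
  have hG2p : Geo (ZMod 4) N 2 ^ (6 * j + 4) * E (ZMod 4) N 2 ^ (6 * j + 4) = 1 := by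
    rw [← mul_pow, hG2E2, one_pow]
  have hthE1 : th (E (ZMod 4) N 1) * Geo (ZMod 4) N 1 = -Lser (ZMod 4) N 1 := by
    have h := th_E_mul_Geo (R := ZMod 4) N 1 le_rfl
    rw [h]; push_cast; ring
  have hthE2 : th (E (ZMod 4) N 2) * Geo (ZMod 4) N 2 = -(2 * Lser (ZMod 4) N 2) := by
    have h := th_E_mul_Geo (R := ZMod 4) N 2 (by omega)
    rw [h]; push_cast; ring
  have hthG1 : th (Geo (ZMod 4) N 1) * E (ZMod 4) N 1 = Lser (ZMod 4) N 1 := by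
    rw [ld_inv hE1G1, hthE1]; ring
  have hthG2 : th (Geo (ZMod 4) N 2) * E (ZMod 4) N 2 = 2 * Lser (ZMod 4) N 2 := by
    rw [ld_inv hE2G2, hthE2]; ring
  have hUT : (Geo (ZMod 4) N 2 ^ (4 * j + 3)
      * (E (ZMod 4) N 1 ^ 2 * E (ZMod 4) N 2 ^ (6 * j + 4))) * TT N j = 1 := by
    rw [TT]
    have h : (Geo (ZMod 4) N 2 ^ (4 * j + 3)
        * (E (ZMod 4) N 1 ^ 2 * E (ZMod 4) N 2 ^ (6 * j + 4)))
        * (E (ZMod 4) N 2 ^ (4 * j + 3) * (Geo (ZMod 4) N 1 ^ 2 * Geo (ZMod 4) N 2 ^ (6 * j + 4)))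
        = (E (ZMod 4) N 2 ^ (4 * j + 3) * Geo (ZMod 4) N 2 ^ (4 * j + 3))
          * ((E (ZMod 4) N 1 ^ 2 * E (ZMod 4) N 2 ^ (6 * j + 4))
            * (Geo (ZMod 4) N 1 ^ 2 * Geo (ZMod 4) N 2 ^ (6 * j + 4))) := by ring
    rw [h, hpow43, DpGp, mul_one]
  have hthTU : th (TT N j) * (Geo (ZMod 4) N 2 ^ (4 * j + 3)
      * (E (ZMod 4) N 1 ^ 2 * E (ZMod 4) N 2 ^ (6 * j + 4)))
      = th (E (ZMod 4) N 2 ^ (4 * j + 3)) * Geo (ZMod 4) N 2 ^ (4 * j + 3)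
        + th (Geo (ZMod 4) N 1 ^ 2 * Geo (ZMod 4) N 2 ^ (6 * j + 4))
          * (E (ZMod 4) N 1 ^ 2 * E (ZMod 4) N 2 ^ (6 * j + 4)) := by
    rw [TT]
    exact ld_mul hpow43 hGpDp
  have hthGp : th (Geo (ZMod 4) N 1 ^ 2 * Geo (ZMod 4) N 2 ^ (6 * j + 4))
      * (E (ZMod 4) N 1 ^ 2 * E (ZMod 4) N 2 ^ (6 * j + 4))
      = th (Geo (ZMod 4) N 1 ^ 2) * E (ZMod 4) N 1 ^ 2
        + th (Geo (ZMod 4) N 2 ^ (6 * j + 4)) * E (ZMod 4) N 2 ^ (6 * j + 4) :=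
    ld_mul hG1p hG2p
  have e1 := ld_pow hG1E1 2
  have e2 := ld_pow hG2E2 (6 * j + 4)
  have e3 := ld_pow hE2G2 (4 * j + 3)
  calc th (TT N j)
      = th (TT N j) * ((Geo (ZMod 4) N 2 ^ (4 * j + 3)
          * (E (ZMod 4) N 1 ^ 2 * E (ZMod 4) N 2 ^ (6 * j + 4))) * TT N j) := by
        rw [hUT, mul_one]
    _ = (th (TT N j) * (Geo (ZMod 4) N 2 ^ (4 * j + 3)
          * (E (ZMod 4) N 1 ^ 2 * E (ZMod 4) N 2 ^ (6 * j + 4)))) * TT N j := by ring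
    _ = (2 * (Lser (ZMod 4) N 1 + ((2 * j + 1 : ℕ) : (ZMod 4)⟦X⟧) * Lser (ZMod 4) N 2))
          * TT N j := by
        rw [hthTU, hthGp, e1, e2, e3, hthE2, hthG1, hthG2]
        push_cast
        ring

/-! ### reduction mod 2 -/

noncomputable def rho2 : ZMod 4 →+* ZMod 2 := ZMod.castHom (show 2 ∣ 4 by norm_num) (ZMod 2)

lemma TT2_inv : PowerSeries.map rho2 (TT N j) * E (ZMod 2) N 2 ^ (2 * j + 2) = 1 := by
  have h0 := congrArg (PowerSeries.map rho2) (TT_spec N j)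
  rw [map_mul, map_mul, map_pow, map_pow, map_pow, map_E, map_E, E_one_sq] at h0
  -- h0 : map rho2 (TT N j) * (E Z2 N 2 * E Z2 N 2 ^ (6j+4)) = E Z2 N 2 ^ (4j+3)
  have hE2G2 : E (ZMod 2) N 2 * Geo (ZMod 2) N 2 = 1 := E_mul_Geo N 2 (by omega)
  have hpow43 : E (ZMod 2) N 2 ^ (4 * j + 3) * Geo (ZMod 2) N 2 ^ (4 * j + 3) = 1 := by
    rw [← mul_pow, hE2G2, one_pow]
  rw [← pow_succ'] at h0
  -- h0 : map rho2 (TT N j) * E Z2 N 2 ^ (6j+4+1) = E Z2 N 2 ^ (4j+3)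
  calc PowerSeries.map rho2 (TT N j) * E (ZMod 2) N 2 ^ (2 * j + 2)
      = PowerSeries.map rho2 (TT N j) * E (ZMod 2) N 2 ^ (2 * j + 2)
        * (E (ZMod 2) N 2 ^ (4 * j + 3) * Geo (ZMod 2) N 2 ^ (4 * j + 3)) := by
        rw [hpow43, mul_one]
    _ = (PowerSeries.map rho2 (TT N j) * E (ZMod 2) N 2 ^ (6 * j + 4 + 1))
          * Geo (ZMod 2) N 2 ^ (4 * j + 3) := by
        rw [show 6 * j + 4 + 1 = (2 * j + 2) + (4 * j + 3) by omega, pow_add]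
        ring
    _ = E (ZMod 2) N 2 ^ (4 * j + 3) * Geo (ZMod 2) N 2 ^ (4 * j + 3) := by rw [h0]
    _ = 1 := hpow43

lemma S4_TT2 : S4 (PowerSeries.map rho2 (TT N j)) := by
  have hE4 : (E (ZMod 2) N 2) ^ (2 * j + 2) = (E (ZMod 2) N 4) ^ (j + 1) := by
    rw [show 2 * j + 2 = 2 * (j + 1) by ring, pow_mul, E_two_sq]
  refine S4_of_inv (g := (E (ZMod 2) N 2) ^ (2 * j + 2)) ?_ ?_ ?_
  · rw [hE4]; exact S4_pow (S4_E_four N) _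
  · rw [map_pow, constCoeff_E N 2 (by omega), one_pow]
  · rw [mul_comm]; exact TT2_inv N j

lemma map_mk {S : Type*} [CommRing S] (ρ : R →+* S) (g : ℕ → R) :
    PowerSeries.map ρ (PowerSeries.mk g) = PowerSeries.mk fun i => ρ (g i) := by
  ext i
  rw [coeff_map, coeff_mk, coeff_mk]

lemma map_one_sub_pow {S : Type*} [CommRing S] (ρ : R →+* S) (a e : ℕ) :
    PowerSeries.map ρ (((1 : R⟦X⟧) - X ^ a) ^ e) = ((1 : S⟦X⟧) - X ^ a) ^ e := by
  rw [map_pow, map_sub, map_one, map_pow, PowerSeries.map_X]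

end Stmt5Aux

/-- `ElongatedDiamondGF d` says that for every `k ≥ 1`, the sequence `d k` satisfies the
formal power series identity `∑_{n≥0} d_k(n) q^n = ∏_{m≥1} (1 − q^{2m})^k / ∏_{m≥1} (1 − q^m)^{3k+1}`
in `ℤ[[q]]`, i.e. `(∑_{n≥0} d_k(n) q^n) · ∏_{m≥1} (1 − q^m)^{3k+1} = ∏_{m≥1} (1 − q^{2m})^k`.
Since the factors with `m > n` do not affect the coefficient of `q^n`, this infinite-product
identity is encoded coefficient-wise via the truncated (finite) products over `1 ≤ m ≤ n`.
Combinatorially, `d k n` counts the partitions obtained by adding the links of the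
`k`-elongated plane partition diamonds of length `n`. -/
def ElongatedDiamondGF (d : ℕ → ℕ → ℤ) : Prop :=
  ∀ k : ℕ, 1 ≤ k → ∀ n : ℕ,
    (PowerSeries.coeff (R := ℤ) n)
        ((PowerSeries.mk fun i => d k i) *
          ∏ m ∈ Finset.Icc 1 n, (1 - PowerSeries.X ^ m) ^ (3 * k + 1)) =
      (PowerSeries.coeff (R := ℤ) n) (∏ m ∈ Finset.Icc 1 n, (1 - PowerSeries.X ^ (2 * m)) ^ k)

open PowerSeries Finset Stmt5Aux in
theorem stmt_5 (d : ℕ → ℕ → ℤ) (hd : ElongatedDiamondGF d) :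
    ∀ n j : ℕ, (4 : ℤ) ∣ d (4 * j + 3) (4 * n + 3) := by
  intro n j
  obtain ⟨k, hk⟩ : ∃ k, k = 4 * j + 3 := ⟨_, rfl⟩
  obtain ⟨N, hN⟩ : ∃ N, N = 4 * n + 3 := ⟨_, rfl⟩
  rw [← hk, ← hN]
  have hk1 : 1 ≤ k := by omega
  -- Step 1: over ℤ, mod X^(N+1)
  have hZ : (X : ℤ⟦X⟧) ^ (N + 1) ∣
      ((PowerSeries.mk fun i => d k i) * ∏ m ∈ Icc 1 N, (1 - X ^ m) ^ (3 * k + 1)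
        - ∏ m ∈ Icc 1 N, (1 - X ^ (2 * m)) ^ k) := by
    rw [X_pow_dvd_iff]
    intro i hi
    have hiN : i ≤ N := by omega
    rw [map_sub, sub_eq_zero]
    have c1 : coeff (R := ℤ) i ((PowerSeries.mk fun i => d k i)
          * ∏ m ∈ Icc 1 N, (1 - X ^ m) ^ (3 * k + 1))
        = coeff (R := ℤ) i ((PowerSeries.mk fun i => d k i)
          * ∏ m ∈ Icc 1 i, (1 - X ^ m) ^ (3 * k + 1)) := by
      have h := coeff_mul_prod_cut (R := ℤ) (PowerSeries.mk fun i => d k i) hiN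
        (fun m => (1 - X ^ (1 * m)) ^ (3 * k + 1))
        (fun m him => dvd_pow_factor_sub_one him le_rfl)
      simpa [one_mul] using h
    have c3 : coeff (R := ℤ) i (∏ m ∈ Icc 1 N, (1 - X ^ (2 * m)) ^ k)
        = coeff (R := ℤ) i (∏ m ∈ Icc 1 i, (1 - X ^ (2 * m)) ^ k) := by
      have h := coeff_mul_prod_cut (R := ℤ) 1 hiN
        (fun m => (1 - X ^ (2 * m)) ^ k)
        (fun m him => dvd_pow_factor_sub_one him (by omega))
      simpa [one_mul] using h
    rw [c1, c3, hd k hk1 i]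
  -- Step 2: map to ZMod 4
  have hZ4 : (X : (ZMod 4)⟦X⟧) ^ (N + 1) ∣
      ((PowerSeries.mk fun i => ((d k i : ℤ) : ZMod 4))
          * ∏ m ∈ Icc 1 N, (1 - X ^ m) ^ (3 * k + 1)
        - ∏ m ∈ Icc 1 N, (1 - X ^ (2 * m)) ^ k) := by
    obtain ⟨c, hc⟩ := hZ
    refine ⟨PowerSeries.map (Int.castRingHom (ZMod 4)) c, ?_⟩
    calc (PowerSeries.mk fun i => ((d k i : ℤ) : ZMod 4))
          * ∏ m ∈ Icc 1 N, (1 - X ^ m) ^ (3 * k + 1)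
        - ∏ m ∈ Icc 1 N, (1 - X ^ (2 * m)) ^ k
        = PowerSeries.map (Int.castRingHom (ZMod 4))
            ((PowerSeries.mk fun i => d k i) * ∏ m ∈ Icc 1 N, (1 - X ^ m) ^ (3 * k + 1)
              - ∏ m ∈ Icc 1 N, (1 - X ^ (2 * m)) ^ k) := by
          rw [map_sub, map_mul, map_mk, map_prod, map_prod]
          congr 1
          · congr 1
            exact Finset.prod_congr rfl fun m _ =>
              (map_one_sub_pow (Int.castRingHom (ZMod 4)) m (3 * k + 1)).symm
          · exact Finset.prod_congr rfl fun m _ =>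
              (map_one_sub_pow (Int.castRingHom (ZMod 4)) (2 * m) k).symm
      _ = PowerSeries.map (Int.castRingHom (ZMod 4)) (X ^ (N + 1) * c) := by rw [hc]
      _ = X ^ (N + 1) * PowerSeries.map (Int.castRingHom (ZMod 4)) c := by
          rw [map_mul, map_pow, PowerSeries.map_X]
  -- Step 3: rewrite the products via the mod-4 identity (1-x)^4 = (1-x^2)^2
  have hPP : (∏ m ∈ Icc 1 N, ((1 : (ZMod 4)⟦X⟧) - X ^ m) ^ (3 * k + 1))
      = E (ZMod 4) N 1 ^ 2 * E (ZMod 4) N 2 ^ (6 * j + 4) := by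
    have hfac : ∀ m ∈ Icc 1 N, ((1 : (ZMod 4)⟦X⟧) - X ^ m) ^ (3 * k + 1)
        = (1 - X ^ (1 * m)) ^ 2 * (1 - X ^ (2 * m)) ^ (6 * j + 4) := by
      intro m _
      rw [one_mul, show 3 * k + 1 = 2 + 4 * (3 * j + 2) by omega, pow_add, pow_mul,
        zmod4_pow_four, ← pow_mul, show 2 * (3 * j + 2) = 6 * j + 4 by ring]
    rw [Finset.prod_congr rfl hfac, Finset.prod_mul_distrib, Finset.prod_pow, Finset.prod_pow,
      E, E]
  have hQQ : (∏ m ∈ Icc 1 N, ((1 : (ZMod 4)⟦X⟧) - X ^ (2 * m)) ^ k)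
      = E (ZMod 4) N 2 ^ (4 * j + 3) := by
    rw [Finset.prod_pow, E, hk]
  rw [hPP, hQQ] at hZ4
  -- Step 4: coeff N of f4 equals coeff N of TT
  have hTdvd : (X : (ZMod 4)⟦X⟧) ^ (N + 1) ∣
      ((PowerSeries.mk fun i => ((d k i : ℤ) : ZMod 4)) - TT N j) := by
    have h2 : ((PowerSeries.mk fun i => ((d k i : ℤ) : ZMod 4))
          * (E (ZMod 4) N 1 ^ 2 * E (ZMod 4) N 2 ^ (6 * j + 4))
          - E (ZMod 4) N 2 ^ (4 * j + 3))
          * (Geo (ZMod 4) N 1 ^ 2 * Geo (ZMod 4) N 2 ^ (6 * j + 4))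
        = (PowerSeries.mk fun i => ((d k i : ℤ) : ZMod 4)) - TT N j := by
      rw [sub_mul, mul_assoc, DpGp, mul_one, TT]
    rw [← h2]
    exact Dvd.dvd.mul_right hZ4 _
  have htN : coeff (R := ZMod 4) N (PowerSeries.mk fun i => ((d k i : ℤ) : ZMod 4))
      = coeff (R := ZMod 4) N (TT N j) := coeff_eq_of_dvd hTdvd le_rfl
  -- Step 5: coefficient extraction from the log-derivative identity
  have hcoeffN := congrArg (coeff (R := ZMod 4) N) (th_TT N j)
  rw [coeff_th] at hcoeffN
  have hrw : (2 * (Lser (ZMod 4) N 1 + ((2 * j + 1 : ℕ) : (ZMod 4)⟦X⟧) * Lser (ZMod 4) N 2))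
        * TT N j
      = (Lser (ZMod 4) N 1 + ((2 * j + 1 : ℕ) : (ZMod 4)⟦X⟧) * Lser (ZMod 4) N 2) * TT N j
        + (Lser (ZMod 4) N 1 + ((2 * j + 1 : ℕ) : (ZMod 4)⟦X⟧) * Lser (ZMod 4) N 2) * TT N j := by
    ring
  rw [hrw, map_add] at hcoeffN
  -- Step 6: the doubled coefficient vanishes, via mod 2
  have hu2 : rho2 (coeff (R := ZMod 4) N
      ((Lser (ZMod 4) N 1 + ((2 * j + 1 : ℕ) : (ZMod 4)⟦X⟧) * Lser (ZMod 4) N 2) * TT N j))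
      = 0 := by
    rw [← PowerSeries.coeff_map]
    rw [show (PowerSeries.map rho2)
        ((Lser (ZMod 4) N 1 + ((2 * j + 1 : ℕ) : (ZMod 4)⟦X⟧) * Lser (ZMod 4) N 2) * TT N j)
        = (Lser (ZMod 2) N 1 + ((2 * j + 1 : ℕ) : (ZMod 2)⟦X⟧) * Lser (ZMod 2) N 2)
          * PowerSeries.map rho2 (TT N j) from by
      rw [map_mul, map_add, map_mul, map_Lser, map_Lser, map_natCast]]
    rw [PowerSeries.coeff_mul]
    refine Finset.sum_eq_zero fun p hp => ?_
    rw [Finset.HasAntidiagonal.mem_antidiagonal] at hp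
    by_cases h4 : 4 ∣ p.2
    · have hb : p.1 % 4 = 3 := by omega
      rw [map_add, coeff_L_one_odd (by omega) hb,
        ← map_natCast (C (R := ZMod 2)) (2 * j + 1), coeff_C_mul,
        coeff_L_two_odd (by omega), mul_zero, add_zero, zero_mul]
    · rw [S4_TT2 N j p.2 h4, mul_zero]
  have h2u : coeff (R := ZMod 4) N
        ((Lser (ZMod 4) N 1 + ((2 * j + 1 : ℕ) : (ZMod 4)⟦X⟧) * Lser (ZMod 4) N 2) * TT N j)
      + coeff (R := ZMod 4) N
        ((Lser (ZMod 4) N 1 + ((2 * j + 1 : ℕ) : (ZMod 4)⟦X⟧) * Lser (ZMod 4) N 2) * TT N j)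
      = 0 := by
    have hdec : ∀ v : ZMod 4, rho2 v = 0 → v + v = 0 := by decide
    exact hdec _ hu2
  rw [h2u] at hcoeffN
  -- Step 7: conclude
  have hN4 : ((N : ℕ) : ZMod 4) = 3 := by
    rw [hN]
    push_cast
    rw [show (4 : ZMod 4) = 0 from rfl, zero_mul, zero_add]
  rw [hN4] at hcoeffN
  have hT0 : coeff (R := ZMod 4) N (TT N j) = 0 := by
    have h3 : ∀ t : ZMod 4, 3 * t = 0 → t = 0 := by decide
    exact h3 _ hcoeffN
  have hfin : ((d k N : ℤ) : ZMod 4) = 0 := by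
    rw [← coeff_mk N (fun i => ((d k i : ℤ) : ZMod 4)), htN, hT0]
  have := (ZMod.intCast_zmod_eq_zero_iff_dvd (d k N) 4).mp hfin
  exact_mod_cast this
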